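/- Let $L_U$ be an $\mathbb{F}_q$-linear set of rank $m \leq n(r-2)$ in $\mathrm{PG}(r-1, q^n)$ with $r > 2$. Then for each point $P \in L_U$, the number of lines through $P$ that are tangent to $L_U$ (i.e., meet $L_U$ only in $P$) exceeds $(q^{n(r-2)} - 1)/(q^n - 1)$; in particular, these tangent lines are not all contained in a single hyperplane, so there exist $r-1$ tangent lines through $P$ spanning $\mathrm{PG}(r-1, q^n)$. -/

import Mathlib

open Module Submodule

theorem count_lines {L : Type*} [Field L] [Fintype L] {Q : Type*} [AddCommGroup Q]
    [Module L Q] [Finite Q] (X : Submodule L Q) :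
    Set.ncard {ℓ : Submodule L Q | Module.finrank L ℓ = 1 ∧ ℓ ≤ X} * (Fintype.card L - 1)
      = Nat.card X - 1 := by
  classical
  have : Fintype Q := Fintype.ofFinite Q
  have hfsub : Finite (Submodule L Q) :=
    Finite.of_injective (fun W => (W : Set Q)) SetLike.coe_injective
  have : Fintype (Submodule L Q) := Fintype.ofFinite _
  have : Module.Finite L Q := Module.Finite.of_finite
  set s : Finset Q := Finset.univ.filter (fun x => x ∈ X ∧ x ≠ 0) with hs
  set t : Finset (Submodule L Q) :=
    Finset.univ.filter (fun ℓ => Module.finrank L ℓ = 1 ∧ ℓ ≤ X) with ht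
  -- generic: card of (elements of Y, nonzero) = Nat.card Y - 1
  have hcard : ∀ Y : Submodule L Q,
      (Finset.univ.filter (fun x => x ∈ Y ∧ x ≠ 0)).card = Nat.card Y - 1 := by
    intro Y
    have h1 : (Finset.univ.filter (fun x => x ∈ Y ∧ x ≠ 0))
        = (Finset.univ.filter (fun x => x ∈ Y)) \ {0} := by
      ext x; simp [and_comm]
    rw [h1, Finset.card_sdiff_of_subset (by simp [Y.zero_mem])]
    have h2 : (Finset.univ.filter (fun x => x ∈ Y)).card = Nat.card Y := by
      rw [Nat.card_eq_fintype_card, Fintype.card_subtype]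
    simp [h2]
  have key : ∀ ℓ ∈ t, (s.filter (fun x => Submodule.span L {x} = ℓ)).card
      = Fintype.card L - 1 := by
    intro ℓ hℓ
    rw [ht, Finset.mem_filter] at hℓ
    obtain ⟨-, hrank, hle⟩ := hℓ
    have h1 : s.filter (fun x => Submodule.span L {x} = ℓ)
        = Finset.univ.filter (fun x => x ∈ ℓ ∧ x ≠ 0) := by
      ext x
      simp only [hs, Finset.mem_filter, Finset.mem_univ, true_and, and_assoc]
      constructor
      · rintro ⟨hX, hx0, hsp⟩
        exact ⟨hsp ▸ Submodule.mem_span_singleton_self x, hx0⟩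
      · rintro ⟨hxl, hx0⟩
        refine ⟨hle hxl, hx0, ?_⟩
        apply Submodule.eq_of_le_of_finrank_eq
          ((Submodule.span_singleton_le_iff_mem x ℓ).mpr hxl)
        rw [finrank_span_singleton hx0, hrank]
    rw [h1, hcard ℓ]
    congr 1
    rw [Nat.card_eq_fintype_card]
    have := card_eq_pow_finrank (K := L) (V := ℓ)
    rw [this, hrank, pow_one]
  have main := Finset.card_eq_sum_card_fiberwise
    (f := fun x => Submodule.span L {x}) (s := s) (t := t) ?_
  · rw [Finset.sum_congr rfl key, Finset.sum_const, smul_eq_mul] at main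
    have hset : {ℓ : Submodule L Q | Module.finrank L ℓ = 1 ∧ ℓ ≤ X}.ncard = t.card := by
      rw [ht]
      rw [Set.ncard_eq_toFinset_card']
      congr 1
      ext ℓ
      simp
    rw [hset, ← main, hs, hcard X]
  · intro x hx
    rw [hs, Finset.mem_coe, Finset.mem_filter] at hx
    rw [ht, Finset.mem_coe, Finset.mem_filter]
    exact ⟨Finset.mem_univ _, finrank_span_singleton hx.2.2,
      (Submodule.span_singleton_le_iff_mem x X).mpr hx.2.1⟩

theorem rank_two {L V : Type*} [Field L] [AddCommGroup V] [Module L V]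
    [FiniteDimensional L V] {v u : V} (hv : v ≠ 0) (hu : u ∉ Submodule.span L {v}) :
    Module.finrank L (Submodule.span L ({v, u} : Set V)) = 2 := by
  have h1 : Submodule.span L ({v, u} : Set V) = (Submodule.span L {v}) ⊔ Submodule.span L {u} := by
    rw [Submodule.span_insert]
  have hlt : Submodule.span L {v} < Submodule.span L ({v, u} : Set V) := by
    refine lt_of_le_of_ne (Submodule.span_mono (by simp)) ?_
    intro h
    exact hu (h ▸ Submodule.subset_span (by simp))
  have h2 : 2 ≤ Module.finrank L (Submodule.span L ({v, u} : Set V)) := by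
    have := Submodule.finrank_lt_finrank_of_lt hlt
    rw [finrank_span_singleton hv] at this
    omega
  have hu0 : u ≠ 0 := fun h => hu (h ▸ Submodule.zero_mem _)
  have h3 : Module.finrank L (Submodule.span L ({v, u} : Set V)) ≤ 2 := by
    have := Submodule.finrank_sup_add_finrank_inf_eq (Submodule.span L {v}) (Submodule.span L {u})
    rw [finrank_span_singleton hv, finrank_span_singleton hu0, ← h1] at this
    omega
  omega


theorem key_ineq {q n r m : ℕ} (hq2 : 2 ≤ q) (hn1 : 1 ≤ n) (hr : 2 < r)
    (hm1 : 1 ≤ m) (hm : m ≤ n * (r - 2)) :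
    (q ^ (n * (r - 2)) - 1) + (q ^ (m - 1) - 1) * (q ^ n - 1) < q ^ (n * (r - 1)) - 1 := by
  set A := n * (r - 2) with hA
  have hA1 : 1 ≤ A := le_trans hn1 (Nat.le_mul_of_pos_right n (by omega))
  have hB : n * (r - 1) = A + n := by
    have h : r - 1 = (r - 2) + 1 := by omega
    rw [h, Nat.mul_add, mul_one, hA]
  rw [hB]
  have h1 : q ^ (m - 1) ≤ q ^ (A - 1) := Nat.pow_le_pow_right (by omega) (by omega)
  have hstep : (q ^ A - 1) + (q ^ (A - 1) - 1) * (q ^ n - 1) < q ^ (A + n) - 1 := by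
    have hPA : q ^ A = q ^ (A - 1) * q := by
      rw [← pow_succ]; congr 1; omega
    have hPB : q ^ (A + n) = q ^ (A - 1) * q * q ^ n := by
      rw [← hPA, ← pow_add]
    set P := q ^ (A - 1) with hP
    have hP1 : 1 ≤ P := Nat.one_le_pow _ _ (by omega)
    set c := q ^ n with hc
    have hqc : q ≤ c := by simpa using Nat.pow_le_pow_right (show 1 ≤ q by omega) hn1
    have hc2 : 2 ≤ c := by omega
    rw [hPA, hPB]
    have e1 : 1 ≤ P * q := Nat.one_le_iff_ne_zero.mpr (by positivity)
    have e2 : 1 ≤ P * q * c := Nat.one_le_iff_ne_zero.mpr (by positivity)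
    have hc1 : 1 ≤ c := by omega
    zify [hP1, hc1, e1, e2]
    nlinarith [mul_le_mul_of_nonneg_left (show (1:ℤ) ≤ ((q:ℤ)-1)*((c:ℤ)-1) by nlinarith)
      (show (0:ℤ) ≤ (P:ℤ) by exact_mod_cast Nat.zero_le P)]
  refine lt_of_le_of_lt ?_ hstep
  have : (q ^ (m - 1) - 1) * (q ^ n - 1) ≤ (q ^ (A - 1) - 1) * (q ^ n - 1) :=
    Nat.mul_le_mul_right _ (by omega)
  omega

/-- For an `F_q`-linear set `L_U` of rank `m ≤ n(r-2)` in `PG(r-1, q^n)`, `r > 2`,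
through each point `P = ⟨v⟩ ∈ L_U` there are more than `(q^{n(r-2)}-1)/(q^n-1)`
tangent lines to `L_U`, and there exist `r - 1` tangent lines through `P`
spanning the whole space. -/
theorem stmt_2 (q n r m : ℕ) (K L : Type*) [Field K] [Field L] [Algebra K L]
    [Fintype K] [Fintype L] (hK : Fintype.card K = q) (hL : Fintype.card L = q ^ n)
    (V : Type*) [AddCommGroup V] [Module L V] [Module K V] [IsScalarTower K L V]
    [Module.Finite L V]
    (hV : Module.finrank L V = r) (hr : 2 < r)
    (U : Submodule K V) (hU : Module.finrank K U = m) (hm : m ≤ n * (r - 2))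
    (v : V) (hv : v ≠ 0) (hvU : v ∈ U) :
    Set.ncard {W : Submodule L V | Module.finrank L W = 2 ∧ v ∈ W ∧
        ∀ u ∈ U, u ≠ 0 → u ∈ W → u ∈ Submodule.span L {v}} >
      (q ^ (n * (r - 2)) - 1) / (q ^ n - 1) ∧
    ∃ T : Finset (Submodule L V), T.card = r - 1 ∧
      (∀ W ∈ T, Module.finrank L W = 2 ∧ v ∈ W ∧
        ∀ u ∈ U, u ≠ 0 → u ∈ W → u ∈ Submodule.span L {v}) ∧
      (⨆ W ∈ T, W) = (⊤ : Submodule L V) := by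
  classical
  have hq2 : 2 ≤ q := by rw [← hK]; exact Fintype.one_lt_card
  have hn1 : 1 ≤ n := by
    by_contra h
    have hn0 : n = 0 := by omega
    rw [hn0, pow_zero] at hL
    have := Fintype.one_lt_card (α := L)
    omega
  have hfinV : Finite V := Module.finite_of_finite L
  have hfdV : FiniteDimensional L V := ‹Module.Finite L V›
  have hfdKV : FiniteDimensional K V := Module.Finite.of_finite
  set S : Submodule L V := Submodule.span L {v} with hS
  have hfinQ : Finite (V ⧸ S) := Quotient.finite _
  have hfsub : Finite (Submodule L (V ⧸ S)) :=
    Finite.of_injective (fun W => (W : Set (V ⧸ S))) SetLike.coe_injective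
  let π : V →ₗ[L] V ⧸ S := S.mkQ
  have hπsurj : Function.Surjective π := Submodule.mkQ_surjective S
  have hrankS : Module.finrank L S = 1 := finrank_span_singleton hv
  have hrankQ : Module.finrank L (V ⧸ S) = r - 1 := by
    have h := S.finrank_quotient_add_finrank
    rw [hV, hrankS] at h
    omega
  have hfdQ : FiniteDimensional L (V ⧸ S) := Module.Finite.of_finite
  have hfdKQ : FiniteDimensional K (V ⧸ S) := Module.Finite.of_finite
  let f : U →ₗ[K] V ⧸ S := (π.restrictScalars K).comp U.subtype
  have hπv : π v = 0 := by
    simpa [π] using (Submodule.Quotient.mk_eq_zero S).mpr (Submodule.mem_span_singleton_self v)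
  have hπ0 : ∀ u : V, π u = 0 ↔ u ∈ S := by
    intro u
    simpa [π] using Submodule.Quotient.mk_eq_zero S (x := u)
  -- rank of the image of U
  have hm1 : 1 ≤ m := by
    rw [← hU]
    have : Nontrivial U := nontrivial_of_ne ⟨v, hvU⟩ 0 (by simp [Subtype.ext_iff, hv])
    exact Module.finrank_pos
  have hrange : Module.finrank K (LinearMap.range f) ≤ m - 1 := by
    have h := LinearMap.finrank_range_add_finrank_ker f
    rw [hU] at h
    have hker : 0 < Module.finrank K (LinearMap.ker f) := by
      have hmem : (⟨v, hvU⟩ : U) ∈ LinearMap.ker f := by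
        simp only [LinearMap.mem_ker, f, LinearMap.comp_apply]
        simpa using hπv
      have : Nontrivial (LinearMap.ker f) :=
        nontrivial_of_ne ⟨⟨v, hvU⟩, hmem⟩ 0 (by simp [Subtype.ext_iff, hv])
      exact Module.finrank_pos
    omega
  have hcardrange : Nat.card (LinearMap.range f) ≤ q ^ (m - 1) := by
    have : Fintype (LinearMap.range f) := Fintype.ofFinite _
    rw [Nat.card_eq_fintype_card, card_eq_pow_finrank (K := K), hK]
    exact Nat.pow_le_pow_right (by omega) hrange
  set TV : Set (Submodule L V) := {W | Module.finrank L W = 2 ∧ v ∈ W ∧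
      ∀ u ∈ U, u ≠ 0 → u ∈ W → u ∈ Submodule.span L {v}} with hTVdef
  set good : Submodule L (V ⧸ S) → Prop :=
    fun ℓ => ∀ c : V ⧸ S, c ∈ LinearMap.range f → c ≠ 0 → c ∉ ℓ with hgooddef
  set TQ : Set (Submodule L (V ⧸ S)) := {ℓ | Module.finrank L ℓ = 1 ∧ good ℓ} with hTQdef
  set BQ : Set (Submodule L (V ⧸ S)) := {ℓ | Module.finrank L ℓ = 1 ∧ ¬ good ℓ} with hBQdef
  have hSle : ∀ {W : Submodule L V}, v ∈ W → S ≤ W := by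
    intro W h
    rw [hS]
    exact (Submodule.span_singleton_le_iff_mem v W).mpr h
  have hcomap : ∀ W : Submodule L V, v ∈ W → Submodule.comap π (Submodule.map π W) = W := by
    intro W hW
    rw [Submodule.comap_map_eq]
    have : LinearMap.ker π = S := Submodule.ker_mkQ S
    rw [this]
    exact sup_eq_left.mpr (hSle hW)
  have hmemrange : ∀ u : V, u ∈ U → π u ∈ LinearMap.range f := fun u hu => ⟨⟨u, hu⟩, rfl⟩
  -- building a tangent line over a good point of the quotient
  have hbuild : ∀ a : V ⧸ S, a ≠ 0 → good (Submodule.span L {a}) →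
      ∃ W : Submodule L V, W ∈ TV ∧ Submodule.map π W = Submodule.span L {a} := by
    intro a ha hgood
    obtain ⟨u, hu⟩ := hπsurj a
    have huS : u ∉ S := fun h => ha (by rw [← hu]; exact (hπ0 u).mpr h)
    have hmap : Submodule.map π (Submodule.span L ({v, u} : Set V)) = Submodule.span L {a} := by
      rw [Submodule.map_span]
      rw [Set.image_insert_eq, Set.image_singleton, hπv, hu, Submodule.span_insert_zero]
    refine ⟨Submodule.span L ({v, u} : Set V), ⟨rank_two hv (by rwa [← hS]), 
      Submodule.subset_span (by simp), ?_⟩, hmap⟩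
    intro u₀ hu₀U hu₀0 hu₀W
    have hπu₀ : π u₀ ∈ Submodule.span L {a} := by
      rw [← hmap]
      exact Submodule.mem_map_of_mem hu₀W
    by_cases h0 : π u₀ = 0
    · rw [← hS]; exact (hπ0 u₀).mp h0
    · exact absurd hπu₀ (hgood _ (hmemrange u₀ hu₀U) h0)
  -- forward direction
  have hforward : ∀ W ∈ TV, Submodule.map π W ∈ TQ := by
    intro W hW
    obtain ⟨hrk, hvW, htan⟩ := hW
    have hSW : S ≤ W := hSle hvW
    obtain ⟨w, hwW, hwS⟩ : ∃ w ∈ W, w ∉ S := by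
      by_contra h
      push_neg at h
      have : W = S := le_antisymm h hSW
      rw [this, hrankS] at hrk
      omega
    have hWspan : W = Submodule.span L ({v, w} : Set V) := by
      symm
      apply Submodule.eq_of_le_of_finrank_eq
      · rw [Submodule.span_le]
        rw [Set.insert_subset_iff, Set.singleton_subset_iff]
        exact ⟨hvW, hwW⟩
      · rw [rank_two hv (by rwa [← hS]), hrk]
    have hπw : π w ≠ 0 := fun h => hwS ((hπ0 w).mp h)
    have hmap : Submodule.map π W = Submodule.span L {π w} := by
      rw [hWspan, Submodule.map_span, Set.image_insert_eq, Set.image_singleton, hπv,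
        Submodule.span_insert_zero]
    constructor
    · rw [hmap]
      exact finrank_span_singleton hπw
    · intro c hcr hc0 hcl
      obtain ⟨⟨u₀, hu₀U⟩, rfl⟩ := hcr
      have hπu₀ : π u₀ ∈ Submodule.map π W := hcl
      have hu₀W : u₀ ∈ W := by
        have h1 : u₀ ∈ Submodule.comap π (Submodule.map π W) := hπu₀
        rwa [hcomap W hvW] at h1
      have hu₀0 : u₀ ≠ 0 := by
        intro h
        apply hc0
        simp only [f, LinearMap.comp_apply]
        simp [h]
      have hu₀S : u₀ ∈ S := by rw [hS]; exact htan u₀ hu₀U hu₀0 hu₀W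
      apply hc0
      simp only [f, LinearMap.comp_apply]
      simpa using (hπ0 u₀).mpr hu₀S
  -- the bijection
  have hspan_eq : ∀ ℓ : Submodule L (V ⧸ S), Module.finrank L ℓ = 1 →
      ∀ a ∈ ℓ, a ≠ 0 → Submodule.span L {a} = ℓ := by
    intro ℓ hrk1 a haℓ ha0
    apply Submodule.eq_of_le_of_finrank_eq ((Submodule.span_singleton_le_iff_mem a ℓ).mpr haℓ)
    rw [finrank_span_singleton ha0, hrk1]
  have himg : (fun W => Submodule.map π W) '' TV = TQ := by
    ext ℓ
    constructor
    · rintro ⟨W, hW, rfl⟩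
      exact hforward W hW
    · rintro ⟨hrk1, hgood⟩
      obtain ⟨a, haℓ, ha0⟩ : ∃ a ∈ ℓ, a ≠ 0 := by
        apply Submodule.exists_mem_ne_zero_of_ne_bot
        intro h
        rw [h, finrank_bot] at hrk1
        omega
      have hℓ : Submodule.span L {a} = ℓ := hspan_eq ℓ hrk1 a haℓ ha0
      obtain ⟨W, hWTV, hWmap⟩ := hbuild a ha0 (by rw [hℓ]; exact hgood)
      exact ⟨W, hWTV, by show Submodule.map π W = ℓ; rw [hWmap, hℓ]⟩
  have hinj : Set.InjOn (fun W => Submodule.map π W) TV := by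
    intro W₁ h₁ W₂ h₂ h
    have := congrArg (Submodule.comap π) h
    rwa [hcomap W₁ h₁.2.1, hcomap W₂ h₂.2.1] at this
  have hncard : TV.ncard = TQ.ncard := by
    rw [← himg, Set.ncard_image_of_injOn hinj]
  -- counting
  have hqn2 : 2 ≤ q ^ n := le_trans hq2 (Nat.le_self_pow (by omega) q)
  have hDpos : 0 < q ^ n - 1 := by omega
  have hcardL : Fintype.card L - 1 = q ^ n - 1 := by rw [hL]
  have hcardQ : Nat.card (V ⧸ S) = q ^ (n * (r - 1)) := by
    have : Fintype (V ⧸ S) := Fintype.ofFinite _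
    rw [Nat.card_eq_fintype_card, card_eq_pow_finrank (K := L), hrankQ, hL, ← pow_mul]
  have hTot : {ℓ : Submodule L (V ⧸ S) | Module.finrank L ℓ = 1}.ncard * (q ^ n - 1)
      = q ^ (n * (r - 1)) - 1 := by
    have h := count_lines (L := L) (⊤ : Submodule L (V ⧸ S))
    have h1 : {ℓ : Submodule L (V ⧸ S) | Module.finrank L ℓ = 1 ∧ ℓ ≤ ⊤}
        = {ℓ : Submodule L (V ⧸ S) | Module.finrank L ℓ = 1} := by
      ext ℓ; simp
    have h2 : Nat.card (⊤ : Submodule L (V ⧸ S)) = Nat.card (V ⧸ S) :=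
      Nat.card_congr Submodule.topEquiv.toEquiv
    rw [h1, hcardL, h2, hcardQ] at h
    exact h
  have hsplit : {ℓ : Submodule L (V ⧸ S) | Module.finrank L ℓ = 1}.ncard
      = TQ.ncard + BQ.ncard := by
    rw [← Set.ncard_union_eq ?_ (Set.toFinite _) (Set.toFinite _)]
    · congr 1
      ext ℓ
      simp only [hTQdef, hBQdef, Set.mem_union, Set.mem_setOf_eq]
      tauto
    · rw [Set.disjoint_left]
      rintro ℓ ⟨-, h1⟩ ⟨-, h2⟩
      exact h2 h1
  -- bound on bad lines
  have hBQ : BQ.ncard ≤ q ^ (m - 1) - 1 := by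
    set F : Submodule L (V ⧸ S) → V ⧸ S := fun ℓ =>
      if h : ∃ c, c ∈ LinearMap.range f ∧ c ≠ 0 ∧ c ∈ ℓ then h.choose else 0 with hF
    have hFspec : ∀ ℓ ∈ BQ, F ℓ ∈ LinearMap.range f ∧ F ℓ ≠ 0 ∧ F ℓ ∈ ℓ := by
      rintro ℓ ⟨hrk1, hbad⟩
      have hex : ∃ c, c ∈ LinearMap.range f ∧ c ≠ 0 ∧ c ∈ ℓ := by
        simp only [hgooddef] at hbad
        push_neg at hbad
        obtain ⟨c, h1, h2, h3⟩ := hbad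
        exact ⟨c, h1, h2, h3⟩
      rw [hF]
      simp only [dif_pos hex]
      exact hex.choose_spec
    have hinj2 : Set.InjOn F BQ := by
      intro ℓ₁ h₁ ℓ₂ h₂ he
      obtain ⟨-, hn1', hm1'⟩ := hFspec ℓ₁ h₁
      obtain ⟨-, hn2', hm2'⟩ := hFspec ℓ₂ h₂
      rw [← hspan_eq ℓ₁ h₁.1 _ hm1' hn1', ← hspan_eq ℓ₂ h₂.1 _ hm2' hn2', he]
    have hmaps : Set.MapsTo F BQ ((LinearMap.range f : Set (V ⧸ S)) \ {0}) := by
      intro ℓ hℓ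
      obtain ⟨h1, h2, -⟩ := hFspec ℓ hℓ
      exact ⟨h1, h2⟩
    have := Set.ncard_le_ncard_of_injOn F hmaps hinj2 (Set.toFinite _)
    refine le_trans this ?_
    rw [Set.ncard_diff_singleton_of_mem (by simp : (0 : V ⧸ S) ∈ (LinearMap.range f : Set (V ⧸ S)))]
    have : (LinearMap.range f : Set (V ⧸ S)).ncard = Nat.card (LinearMap.range f) :=
      (Nat.card_coe_set_eq _).symm
    omega
  -- the division bound
  set R : ℕ := (q ^ (n * (r - 2)) - 1) / (q ^ n - 1) with hR
  have hdvd : q ^ n - 1 ∣ q ^ (n * (r - 2)) - 1 := by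
    have := Nat.sub_dvd_pow_sub_pow (q ^ n) 1 (r - 2)
    rwa [one_pow, ← pow_mul] at this
  have hRD : R * (q ^ n - 1) = q ^ (n * (r - 2)) - 1 := Nat.div_mul_cancel hdvd
  have hmain : R < TQ.ncard := by
    have hlt : (R + BQ.ncard) * (q ^ n - 1)
        < (TQ.ncard + BQ.ncard) * (q ^ n - 1) := by
      rw [← hsplit, hTot, Nat.add_mul, hRD]
      calc q ^ (n * (r - 2)) - 1 + BQ.ncard * (q ^ n - 1)
          ≤ q ^ (n * (r - 2)) - 1 + (q ^ (m - 1) - 1) * (q ^ n - 1) := by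
            have := Nat.mul_le_mul_right (q ^ n - 1) hBQ
            omega
        _ < q ^ (n * (r - 1)) - 1 := key_ineq hq2 hn1 hr hm1 hm
    have := Nat.lt_of_mul_lt_mul_right hlt
    omega
  have goal1 : TV.ncard > R := by rw [hncard]; exact hmain
  refine ⟨goal1, ?_⟩
  -- Part 2: spanning tangent lines
  -- good nonzero vectors
  set Gvec : Set (V ⧸ S) := {a | a ≠ 0 ∧ Submodule.span L {a} ∈ TQ} with hGvec
  have hGspan : Submodule.span L Gvec = ⊤ := by
    by_contra hne
    have hlt : Submodule.span L Gvec < ⊤ := lt_top_iff_ne_top.mpr hne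
    have hdim : Module.finrank L (Submodule.span L Gvec) ≤ r - 2 := by
      have := Submodule.finrank_lt (K := L) (V := V ⧸ S) hlt.ne
      omega
    have hsub : TQ ⊆ {ℓ : Submodule L (V ⧸ S) |
        Module.finrank L ℓ = 1 ∧ ℓ ≤ Submodule.span L Gvec} := by
      rintro ℓ ⟨hrk1, hgood⟩
      refine ⟨hrk1, ?_⟩
      obtain ⟨a, haℓ, ha0⟩ : ∃ a ∈ ℓ, a ≠ 0 := by
        apply Submodule.exists_mem_ne_zero_of_ne_bot
        intro h
        rw [h, finrank_bot] at hrk1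
        omega
      have hℓ : Submodule.span L {a} = ℓ := hspan_eq ℓ hrk1 a haℓ ha0
      rw [← hℓ]
      apply Submodule.span_mono
      rw [Set.singleton_subset_iff]
      exact ⟨ha0, by rw [hℓ]; exact ⟨hrk1, hgood⟩⟩
    have hcount := count_lines (L := L) (Submodule.span L Gvec)
    rw [hcardL] at hcount
    have hXcard : Nat.card (Submodule.span L Gvec) ≤ q ^ (n * (r - 2)) := by
      have : Fintype (Submodule.span L Gvec) := Fintype.ofFinite _
      rw [Nat.card_eq_fintype_card, card_eq_pow_finrank (K := L), hL, ← pow_mul]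
      exact Nat.pow_le_pow_right (by omega) (Nat.mul_le_mul_left n hdim)
    have hle : {ℓ : Submodule L (V ⧸ S) |
        Module.finrank L ℓ = 1 ∧ ℓ ≤ Submodule.span L Gvec}.ncard ≤ R := by
      have h1 : {ℓ : Submodule L (V ⧸ S) |
          Module.finrank L ℓ = 1 ∧ ℓ ≤ Submodule.span L Gvec}.ncard * (q ^ n - 1)
          ≤ R * (q ^ n - 1) := by
        rw [hcount, hRD]
        omega
      exact Nat.le_of_mul_le_mul_right h1 hDpos
    have := Set.ncard_le_ncard hsub (Set.toFinite _)
    omega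
  obtain ⟨b, hbG, hbspan, hbli⟩ := exists_linearIndependent L Gvec
  rw [hGspan] at hbspan
  have hbfin : b.Finite := Set.toFinite b
  have : Fintype b := hbfin.fintype
  set basis : Basis b L (V ⧸ S) := Basis.mk hbli (by rw [Subtype.range_coe, hbspan]) with hbasis
  have hbcard : Fintype.card b = r - 1 := by
    rw [← Module.finrank_eq_card_basis basis, hrankQ]
  -- preimage function
  set pre : V ⧸ S → V := Function.surjInv hπsurj with hpre
  have hpre_eq : ∀ a : V ⧸ S, π (pre a) = a := fun a => Function.surjInv_eq hπsurj a
  set g : V ⧸ S → Submodule L V := fun a => Submodule.span L ({v, pre a} : Set V) with hg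
  -- properties of g on Gvec
  have hgprop : ∀ a ∈ Gvec, g a ∈ TV ∧ Submodule.map π (g a) = Submodule.span L {a} := by
    intro a ⟨ha0, hrk1, hgood⟩
    have hpreS : pre a ∉ S := fun h => ha0 (by rw [← hpre_eq a]; exact (hπ0 _).mpr h)
    have hmap : Submodule.map π (g a) = Submodule.span L {a} := by
      rw [hg]
      simp only []
      rw [Submodule.map_span, Set.image_insert_eq, Set.image_singleton, hπv, hpre_eq,
        Submodule.span_insert_zero]
    refine ⟨⟨rank_two hv (by rwa [← hS]), Submodule.subset_span (by simp), ?_⟩, hmap⟩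
    intro u₀ hu₀U hu₀0 hu₀W
    have hπu₀ : π u₀ ∈ Submodule.span L {a} := by
      rw [← hmap]
      exact Submodule.mem_map_of_mem hu₀W
    by_cases h0 : π u₀ = 0
    · rw [← hS]; exact (hπ0 u₀).mp h0
    · exact absurd hπu₀ (hgood _ (hmemrange u₀ hu₀U) h0)
  -- injectivity of a ↦ span {a} on b
  have hspan_inj : ∀ a₁ ∈ b, ∀ a₂ ∈ b, Submodule.span L ({a₁} : Set (V ⧸ S)) =
      Submodule.span L {a₂} → a₁ = a₂ := by
    intro a₁ h₁ a₂ h₂ hsp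
    by_contra hne
    have ha₁ : a₁ ∈ Submodule.span L ({a₂} : Set (V ⧸ S)) := by
      rw [← hsp]; exact Submodule.mem_span_singleton_self a₁
    have key := linearIndependent_iff_eq_zero_of_smul_mem_span.mp hbli ⟨a₁, h₁⟩ 1
    rw [one_smul] at key
    have hmem : a₁ ∈ Submodule.span L
        (Subtype.val '' (Set.univ \ {(⟨a₁, h₁⟩ : b)})) := by
      apply Submodule.span_mono ?_ ha₁
      rw [Set.singleton_subset_iff]
      exact ⟨⟨a₂, h₂⟩, ⟨trivial, by simp [Subtype.ext_iff, Ne.symm hne]⟩, rfl⟩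
    exact one_ne_zero (key hmem)
  have hginj : Set.InjOn g b := by
    intro a₁ h₁ a₂ h₂ he
    have e1 := (hgprop a₁ (hbG h₁)).2
    have e2 := (hgprop a₂ (hbG h₂)).2
    rw [he, e2] at e1
    exact hspan_inj a₁ h₁ a₂ h₂ e1.symm
  set T : Finset (Submodule L V) := b.toFinset.image g with hT
  have hTcard : T.card = r - 1 := by
    rw [hT, Finset.card_image_of_injOn (by rwa [Set.coe_toFinset]), ← hbcard,
      Set.toFinset_card]
  have hTmem : ∀ W ∈ T, W ∈ TV := by
    intro W hW
    rw [hT, Finset.mem_image] at hW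
    obtain ⟨a, ha, rfl⟩ := hW
    rw [Set.mem_toFinset] at ha
    exact (hgprop a (hbG ha)).1
  have hTsup : (⨆ W ∈ T, W) = (⊤ : Submodule L V) := by
    have hmapsup : Submodule.map π (⨆ W ∈ T, W) = ⊤ := by
      rw [Submodule.map_iSup]
      have : ∀ W : Submodule L V, Submodule.map π (⨆ _ : W ∈ T, W)
          = ⨆ _ : W ∈ T, Submodule.map π W := fun W => Submodule.map_iSup _ _
      calc (⨆ W, Submodule.map π (⨆ _ : W ∈ T, W))
          = ⨆ W, ⨆ _ : W ∈ T, Submodule.map π W := by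
            exact iSup_congr this
        _ = ⊤ := by
            have h3 : ∀ a ∈ b, Submodule.map π (g a) = Submodule.span L {a} :=
              fun a ha => (hgprop a (hbG ha)).2
            calc (⨆ W, ⨆ _ : W ∈ T, Submodule.map π W)
                = T.sup (fun W => Submodule.map π W) := (Finset.sup_eq_iSup _ _).symm
              _ = b.toFinset.sup ((fun W => Submodule.map π W) ∘ g) := by
                  rw [hT, Finset.sup_image]
              _ = ⨆ a ∈ b.toFinset, Submodule.map π (g a) := Finset.sup_eq_iSup _ _
              _ = ⨆ a ∈ b, Submodule.map π (g a) := by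
                  apply iSup_congr
                  intro a
                  rw [Set.mem_toFinset]
              _ = ⨆ a ∈ b, Submodule.span L {a} := biSup_congr h3
              _ = ⊤ := by rw [← Submodule.span_eq_iSup_of_singleton_spans, hbspan]
    have hSsup : S ≤ ⨆ W ∈ T, W := by
      have hne : T.Nonempty := by
        rw [← Finset.card_pos, hTcard]; omega
      obtain ⟨W₀, hW₀⟩ := hne
      have h1 : v ∈ W₀ := (hTmem W₀ hW₀).2.1
      exact le_trans (hSle h1) (le_iSup₂ (f := fun (W : Submodule L V) (_ : W ∈ T) => W) W₀ hW₀)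
    have h2 : Submodule.comap π (Submodule.map π (⨆ W ∈ T, W)) = ⨆ W ∈ T, W := by
      rw [Submodule.comap_map_eq, Submodule.ker_mkQ]
      exact sup_eq_left.mpr hSsup
    rw [hmapsup, Submodule.comap_top] at h2
    exact h2.symm
  exact ⟨T, hTcard, fun W hW => hTmem W hW, hTsup⟩
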